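/- Let G and G' be simple graphs on the same number n of vertices. Then the following are equivalent: (1) η̄_G = η̄_{G'} as polynomials in (x,t,u); (2) μ_G(x,a,b) = μ_{G'}(x,a,b) for all real a, b > 0 and all x ∈ ℂ; (3) there exists c ∈ ℂ such that μ_G(x,a,c) = μ_{G'}(x,a,c) for all x ∈ ℂ and all a ∈ ℂ for which both (a+c)·I_n + D_G and (a+c)·I_n + D_{G'} are invertible. -/

import Mathlib

open Matrix

noncomputable section

namespace Stmt14

/-- The degree matrix of the graph with (complex-valued 0/1) adjacency matrix `A`. -/
def degC {n : ℕ} (A : Matrix (Fin n) (Fin n) ℂ) : Matrix (Fin n) (Fin n) ℂ :=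
  Matrix.diagonal fun i => ∑ j, A i j

/-- The generalized characteristic polynomial of a graph:
`η̄_G(x,t,u) = det(x·I + t·D + u·A)`. -/
def etaBar {n : ℕ} (A : Matrix (Fin n) (Fin n) ℂ) (x t u : ℂ) : ℂ :=
  (x • (1 : Matrix (Fin n) (Fin n) ℂ) + t • degC A + u • A).det

/-- The `a`-lazy `b`-deadly Markov chain function
`μ_G(x,a,b) = det(x·I + ((a+b)·I + D)⁻¹·(A + a·I))`. -/
def mu {n : ℕ} (A : Matrix (Fin n) (Fin n) ℂ) (x a b : ℂ) : ℂ :=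
  (x • (1 : Matrix (Fin n) (Fin n) ℂ) +
    ((a + b) • (1 : Matrix (Fin n) (Fin n) ℂ) + degC A)⁻¹ *
      (A + a • (1 : Matrix (Fin n) (Fin n) ℂ))).det

end Stmt14

open Stmt14

namespace S14

open Polynomial

variable {n : ℕ}

def dd (A : Matrix (Fin n) (Fin n) ℂ) : Fin n → ℂ := fun i => ∑ j, A i j

lemma smul_one_add_degC (A : Matrix (Fin n) (Fin n) ℂ) (s : ℂ) :
    s • (1 : Matrix (Fin n) (Fin n) ℂ) + degC A = Matrix.diagonal (fun i => s + dd A i) := by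
  ext i j
  rcases eq_or_ne i j with h | h
  · subst h; simp [degC, Matrix.one_apply, dd]
  · simp [degC, Matrix.one_apply, h, dd]

lemma eta_s10_det (A : Matrix (Fin n) (Fin n) ℂ) (s : ℂ) :
    etaBar A s 1 0 = (s • (1 : Matrix (Fin n) (Fin n) ℂ) + degC A).det := by
  unfold etaBar; rw [zero_smul, add_zero, one_smul]

lemma eta_s10 (A : Matrix (Fin n) (Fin n) ℂ) (s : ℂ) :
    etaBar A s 1 0 = ∏ i, (s + dd A i) := by
  rw [eta_s10_det, smul_one_add_degC, Matrix.det_diagonal]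

lemma isUnit_iff (A : Matrix (Fin n) (Fin n) ℂ) (s : ℂ) :
    IsUnit (s • (1 : Matrix (Fin n) (Fin n) ℂ) + degC A) ↔ etaBar A s 1 0 ≠ 0 := by
  rw [Matrix.isUnit_iff_isUnit_det, isUnit_iff_ne_zero, eta_s10_det]

lemma mu_mul (A : Matrix (Fin n) (Fin n) ℂ) (x a b : ℂ)
    (h : IsUnit ((a + b) • (1 : Matrix (Fin n) (Fin n) ℂ) + degC A)) :
    mu A x a b * etaBar A (a + b) 1 0 = etaBar A (x * (a + b) + a) x 1 := by
  set M : Matrix (Fin n) (Fin n) ℂ := (a + b) • 1 + degC A with hM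
  have hdet : IsUnit M.det := (Matrix.isUnit_iff_isUnit_det M).mp h
  have hmat : M * (x • (1 : Matrix (Fin n) (Fin n) ℂ) + M⁻¹ * (A + a • 1))
      = (x * (a + b) + a) • (1 : Matrix (Fin n) (Fin n) ℂ) + x • degC A + (1:ℂ) • A := by
    rw [Matrix.mul_add, Matrix.mul_smul, Matrix.mul_one, ← Matrix.mul_assoc,
      Matrix.mul_nonsing_inv _ hdet, Matrix.one_mul, hM]
    rw [smul_add, smul_smul, add_smul, one_smul]
    abel
  have : mu A x a b * etaBar A (a + b) 1 0
      = (M * (x • (1 : Matrix (Fin n) (Fin n) ℂ) + M⁻¹ * (A + a • 1))).det := by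
    rw [Matrix.det_mul, mul_comm, mu, eta_s10_det]
  rw [this, hmat, etaBar]

lemma eta_pos_ne (A : Matrix (Fin n) (Fin n) ℂ) (h01 : ∀ i j, A i j = 0 ∨ A i j = 1)
    (s : ℂ) (hs : 0 < s.re) : etaBar A s 1 0 ≠ 0 := by
  rw [eta_s10]
  apply Finset.prod_ne_zero_iff.mpr
  intro i _ h0
  have hdd : 0 ≤ (dd A i).re := by
    have : (dd A i).re = ∑ j, (A i j).re := by
      unfold dd; rw [Complex.re_sum]
    rw [this]
    apply Finset.sum_nonneg
    intro j _
    rcases h01 i j with h | h <;> simp [h]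
  have h1 : (s + dd A i).re = 0 := by rw [h0]; simp
  rw [Complex.add_re] at h1
  linarith

/-- polynomial family used to make various specializations of `etaBar` polynomial. -/
def etaP (A : Matrix (Fin n) (Fin n) ℂ) (α β γ δ ε ζ : ℂ) : ℂ[X] :=
  ((C α * X + C β) • (1 : Matrix (Fin n) (Fin n) ℂ[X])
    + (C γ * X + C δ) • (degC A).map C
    + (C ε * X + C ζ) • A.map C).det

lemma etaP_eval (A : Matrix (Fin n) (Fin n) ℂ) (α β γ δ ε ζ z : ℂ) :
    (etaP A α β γ δ ε ζ).eval z = etaBar A (α*z+β) (γ*z+δ) (ε*z+ζ) := by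
  unfold etaP etaBar
  rw [show Polynomial.eval z = ⇑(Polynomial.evalRingHom z) from rfl, RingHom.map_det]
  congr 1
  ext i j
  rcases eq_or_ne i j with h | h
  · subst h
    simp [Matrix.one_apply, Matrix.map_apply]
  · simp [Matrix.one_apply, h, Matrix.map_apply]

lemma eval_ext {p q : ℂ[X]} {S : Set ℂ} (hS : S.Infinite)
    (h : ∀ z ∈ S, p.eval z = q.eval z) : p = q := by
  have h0 : p - q = 0 := by
    apply Polynomial.eq_zero_of_infinite_isRoot
    apply hS.mono
    intro x hx
    simp [Polynomial.IsRoot, Polynomial.eval_sub, h x hx]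
  exact sub_eq_zero.mp h0

lemma exists_eval_ne {p : ℂ[X]} (hp : p ≠ 0) : ∃ z, p.eval z ≠ 0 := by
  by_contra h
  push_neg at h
  exact hp (Polynomial.funext fun r => by simp [h r])

lemma inf_image (a : ℝ) : ((fun r : ℝ => (r:ℂ)) '' Set.Ioi a).Infinite :=
  (Set.Ioi_infinite a).image (fun x _ y _ h => Complex.ofReal_injective h)

lemma inf_ne (w : ℂ) : {z : ℂ | z ≠ w}.Infinite := by
  have : ({w} : Set ℂ).Finite := Set.finite_singleton w
  have h2 := this.infinite_compl
  convert h2 using 1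
  ext z; simp

lemma deriv_prod (f : Fin n → ℂ[X]) :
    derivative (∏ i, f i) = ∑ i, (∏ j ∈ Finset.univ.erase i, f j) * derivative (f i) := by
  classical
  rw [Finset.prod_eq_multiset_prod, Polynomial.derivative_prod, Finset.sum_eq_multiset_sum]
  congr 1

def Pp (A : Matrix (Fin n) (Fin n) ℂ) : ℂ[X] := ∏ i, (X + C (dd A i))

lemma Pp_eval (A : Matrix (Fin n) (Fin n) ℂ) (s : ℂ) :
    (Pp A).eval s = etaBar A s 1 0 := by
  rw [eta_s10]; simp [Pp, Polynomial.eval_prod]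

lemma Pp_monic (A : Matrix (Fin n) (Fin n) ℂ) : (Pp A).Monic :=
  monic_prod_of_monic _ _ fun i _ => monic_X_add_C _

lemma Pp_natDegree (A : Matrix (Fin n) (Fin n) ℂ) : (Pp A).natDegree = n := by
  rw [Pp, Polynomial.natDegree_prod_of_monic _ _ fun i _ => monic_X_add_C _]
  simp

lemma Pp_deriv_eval (A : Matrix (Fin n) (Fin n) ℂ) (s : ℂ) :
    (derivative (Pp A)).eval s = ∑ i, ∏ j ∈ Finset.univ.erase i, (s + dd A j) := by
  rw [Pp, deriv_prod]
  simp [Polynomial.eval_finset_sum, Polynomial.eval_prod]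

lemma det_X_one_add (B : Matrix (Fin n) (Fin n) ℂ) :
    ((X : ℂ[X]) • (1 : Matrix (Fin n) (Fin n) ℂ[X]) + B.map C).det = (-B).charpoly := by
  unfold Matrix.charpoly
  congr 1
  ext i j
  rcases eq_or_ne i j with h | h
  · subst h; simp [Matrix.charmatrix_apply_eq, Matrix.one_apply, Matrix.map_apply]
  · simp [Matrix.charmatrix_apply_ne _ _ _ h, Matrix.one_apply, h, Matrix.map_apply]

lemma coeff_det_diag (hn : 0 < n) (m : Fin n → ℂ) (hm : ∀ i, m i ≠ 0)
    (B : Matrix (Fin n) (Fin n) ℂ) :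
    (((X : ℂ[X]) • ((Matrix.diagonal m).map C) + B.map C).det).coeff (n-1)
      = (∏ i, m i) * ∑ i, (m i)⁻¹ * B i i := by
  have : Nonempty (Fin n) := ⟨⟨0, hn⟩⟩
  set M : Matrix (Fin n) (Fin n) ℂ := Matrix.diagonal m with hMdef
  have hdet : IsUnit M.det := by
    rw [hMdef, Matrix.det_diagonal, isUnit_iff_ne_zero]
    exact Finset.prod_ne_zero_iff.mpr fun i _ => hm i
  have key : (X : ℂ[X]) • (M.map C) + B.map C = (M.map C) * ((X : ℂ[X]) • 1 + (M⁻¹ * B).map C) := by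
    rw [Matrix.mul_add, Matrix.mul_smul, Matrix.mul_one, ← Matrix.map_mul,
      ← Matrix.mul_assoc, Matrix.mul_nonsing_inv _ hdet, Matrix.one_mul]
  rw [key, Matrix.det_mul, show (M.map C).det = C M.det from (RingHom.map_det (C : ℂ →+* ℂ[X]) M).symm,
    det_X_one_add, Polynomial.coeff_C_mul]
  have htr := Matrix.trace_eq_neg_charpoly_coeff (-(M⁻¹ * B))
  rw [Matrix.trace_neg, show Fintype.card (Fin n) = n from Fintype.card_fin n] at htr
  have hco : ((-(M⁻¹ * B)).charpoly).coeff (n-1) = (M⁻¹ * B).trace := by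
    have := congrArg Neg.neg htr
    rw [neg_neg, neg_neg] at this
    exact this.symm
  have hinv : M⁻¹ = Matrix.diagonal (fun i => (m i)⁻¹) := by
    apply Matrix.inv_eq_right_inv
    rw [hMdef, Matrix.diagonal_mul_diagonal]
    rw [show (fun i => m i * (m i)⁻¹) = fun _ => (1:ℂ) from funext fun i => mul_inv_cancel₀ (hm i)]
    exact Matrix.diagonal_one
  rw [hco, hinv, hMdef]
  have htr2 : (Matrix.diagonal (fun i => (m i)⁻¹) * B).trace = ∑ i, (m i)⁻¹ * B i i := by
    unfold Matrix.trace
    congr 1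
    ext i
    simp [Matrix.diag, Matrix.diagonal_mul]
  rw [htr2, Matrix.det_diagonal]

lemma monic_eq_of_deriv (hn : 0 < n) {P R : ℂ[X]} (hP : P.Monic) (hR : R.Monic)
    (hPn : P.natDegree = n) (hRn : R.natDegree = n)
    (h : derivative P * R = derivative R * P) : P = R := by
  by_contra hne
  set S : ℂ[X] := P - R with hSdef
  have hS0 : S ≠ 0 := sub_ne_zero.mpr hne
  have hd : derivative S * R = derivative R * S := by
    rw [hSdef, derivative_sub, sub_mul, h, mul_sub]
  have hkle : S.natDegree ≤ n := le_trans (Polynomial.natDegree_sub_le _ _) (by omega)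
  have hcoeffn : S.coeff n = 0 := by
    rw [hSdef, Polynomial.coeff_sub, ← hPn, hP.coeff_natDegree, hPn, ← hRn, hR.coeff_natDegree]
    ring
  have hkn : S.natDegree < n := by
    rcases lt_or_eq_of_le hkle with h' | h'
    · exact h'
    · exfalso
      apply hS0
      have : S.leadingCoeff = 0 := by rw [Polynomial.leadingCoeff, h', hcoeffn]
      exact Polynomial.leadingCoeff_eq_zero.mp this
  set k := S.natDegree with hkdef
  have hdRne : derivative R ≠ 0 := by
    intro h0
    have := Polynomial.natDegree_eq_zero_of_derivative_eq_zero h0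
    omega
  rcases Nat.eq_zero_or_pos k with hk0 | hk1
  · have hds : derivative S = 0 := by
      obtain ⟨c, hc⟩ := Polynomial.natDegree_eq_zero.mp hk0
      rw [← hc, derivative_C]
    rw [hds, zero_mul] at hd
    rcases mul_eq_zero.mp hd.symm with h1 | h1
    · exact hdRne h1
    · exact hS0 h1
  · have hdsne : derivative S ≠ 0 := by
      intro h0
      have := Polynomial.natDegree_eq_zero_of_derivative_eq_zero h0
      omega
    have hdegS : (derivative S).natDegree = k - 1 := by
      apply Polynomial.natDegree_eq_of_degree_eq_some
      have hx := Polynomial.degree_derivative_eq S (by omega)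
      rw [← hkdef] at hx
      exact hx
    have hdegR : (derivative R).natDegree = n - 1 := by
      apply Polynomial.natDegree_eq_of_degree_eq_some
      have hx := Polynomial.degree_derivative_eq R (by rw [hRn]; omega)
      rw [hRn] at hx
      exact hx
    have hlcS' : (derivative S).leadingCoeff = S.leadingCoeff * k := by
      have h1 : (derivative S).leadingCoeff = S.coeff (k - 1 + 1) * (((k - 1 : ℕ) : ℂ) + 1) := by
        rw [Polynomial.leadingCoeff, hdegS, Polynomial.coeff_derivative]
      rw [show k - 1 + 1 = k from by omega] at h1
      rw [h1, Nat.cast_sub (show 1 ≤ k from by omega), Polynomial.leadingCoeff, ← hkdef]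
      push_cast
      ring
    have hlcR' : (derivative R).leadingCoeff = n := by
      have h1 : (derivative R).leadingCoeff = R.coeff (n - 1 + 1) * (((n - 1 : ℕ) : ℂ) + 1) := by
        rw [Polynomial.leadingCoeff, hdegR, Polynomial.coeff_derivative]
      rw [show n - 1 + 1 = n from by omega] at h1
      have hcn : R.coeff n = 1 := by rw [← hRn]; exact hR.coeff_natDegree
      rw [h1, hcn, Nat.cast_sub (show 1 ≤ n from by omega)]
      push_cast
      ring
    have hcoeq : (derivative S * R).coeff ((derivative S).natDegree + R.natDegree)
        = (derivative R * S).coeff ((derivative R).natDegree + S.natDegree) := by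
      rw [hd]
      congr 1
      rw [hdegS, hdegR, hRn, ← hkdef]
      omega
    rw [Polynomial.coeff_mul_degree_add_degree, Polynomial.coeff_mul_degree_add_degree,
      hlcS', hlcR', hR.leadingCoeff, mul_one] at hcoeq
    have hlcne : S.leadingCoeff ≠ 0 := Polynomial.leadingCoeff_ne_zero.mpr hS0
    rw [mul_comm ((n : ℂ)) S.leadingCoeff] at hcoeq
    have hkn' : (k : ℂ) = n := mul_left_cancel₀ hlcne hcoeq
    have : k = n := Nat.cast_injective hkn'
    omega

end S14
namespace S14
open Polynomial
variable {n : ℕ}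

lemma eta_scale (A : Matrix (Fin n) (Fin n) ℂ) (x t z : ℂ) (hz : z ≠ 0) :
    etaBar A x t z = z^n * etaBar A (x/z) (t/z) 1 := by
  unfold etaBar
  rw [show x • (1 : Matrix (Fin n) (Fin n) ℂ) + t • degC A + z • A
      = z • ((x/z) • (1 : Matrix (Fin n) (Fin n) ℂ) + (t/z) • degC A + (1:ℂ) • A) from by
    rw [smul_add, smul_add, smul_smul, smul_smul, smul_smul,
      mul_div_cancel₀ x hz, mul_div_cancel₀ t hz, mul_one]]
  rw [Matrix.det_smul, Fintype.card_fin]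

lemma fin_step (A A' : Matrix (Fin n) (Fin n) ℂ)
    (hE : ∀ y x : ℂ, etaBar A y x 1 = etaBar A' y x 1) :
    ∀ x t u : ℂ, etaBar A x t u = etaBar A' x t u := by
  intro x t u
  have hne : ∀ z : ℂ, z ≠ 0 → etaBar A x t z = etaBar A' x t z := by
    intro z hz
    rw [eta_scale A x t z hz, eta_scale A' x t z hz, hE]
  have hpq : etaP A 0 x 0 t 1 0 = etaP A' 0 x 0 t 1 0 := by
    apply eval_ext (inf_ne 0)
    intro z hz
    rw [etaP_eval, etaP_eval]
    simp only [zero_mul, zero_add, one_mul, add_zero]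
    exact hne z hz
  have := congrArg (Polynomial.eval u) hpq
  rw [etaP_eval, etaP_eval] at this
  simpa using this

lemma dirI (A A' : Matrix (Fin n) (Fin n) ℂ)
    (h01 : ∀ i j, A i j = 0 ∨ A i j = 1) (h01' : ∀ i j, A' i j = 0 ∨ A' i j = 1)
    (h1 : ∀ x t u : ℂ, etaBar A x t u = etaBar A' x t u) :
    ∀ a b : ℝ, 0 < a → 0 < b → ∀ x : ℂ, mu A x (a : ℂ) (b : ℂ) = mu A' x (a : ℂ) (b : ℂ) := by
  intro a b ha hb x
  have hre : (0:ℝ) < ((a:ℂ) + (b:ℂ)).re := by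
    simp only [Complex.add_re, Complex.ofReal_re]
    linarith
  have hdA : etaBar A ((a:ℂ)+(b:ℂ)) 1 0 ≠ 0 := eta_pos_ne A h01 _ hre
  have hdA' : etaBar A' ((a:ℂ)+(b:ℂ)) 1 0 ≠ 0 := eta_pos_ne A' h01' _ hre
  have hU : IsUnit (((a:ℂ)+(b:ℂ)) • (1 : Matrix (Fin n) (Fin n) ℂ) + degC A) :=
    (isUnit_iff A _).mpr hdA
  have hU' : IsUnit (((a:ℂ)+(b:ℂ)) • (1 : Matrix (Fin n) (Fin n) ℂ) + degC A') :=
    (isUnit_iff A' _).mpr hdA'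
  have e1 := mu_mul A x (a:ℂ) (b:ℂ) hU
  have e2 := mu_mul A' x (a:ℂ) (b:ℂ) hU'
  have hden : etaBar A ((a:ℂ)+(b:ℂ)) 1 0 = etaBar A' ((a:ℂ)+(b:ℂ)) 1 0 := h1 _ _ _
  apply mul_right_cancel₀ hdA'
  have key : mu A x (a:ℂ) (b:ℂ) * etaBar A' ((a:ℂ)+(b:ℂ)) 1 0 = etaBar A' (x * ((a:ℂ)+(b:ℂ)) + (a:ℂ)) x 1 := by
    rw [← hden, e1]
    exact h1 _ _ _
  rw [key, e2]

lemma dirIII (A A' : Matrix (Fin n) (Fin n) ℂ)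
    (h1 : ∀ x t u : ℂ, etaBar A x t u = etaBar A' x t u) :
    ∃ c : ℂ, ∀ a x : ℂ,
        IsUnit ((a + c) • (1 : Matrix (Fin n) (Fin n) ℂ) + degC A) →
        IsUnit ((a + c) • (1 : Matrix (Fin n) (Fin n) ℂ) + degC A') →
        mu A x a c = mu A' x a c := by
  refine ⟨1, fun a x hU hU' => ?_⟩
  have hdA : etaBar A (a+1) 1 0 ≠ 0 := (isUnit_iff A _).mp hU
  have hdA' : etaBar A' (a+1) 1 0 ≠ 0 := (isUnit_iff A' _).mp hU'
  have e1 := mu_mul A x a 1 hU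
  have e2 := mu_mul A' x a 1 hU'
  have hden : etaBar A (a+1) 1 0 = etaBar A' (a+1) 1 0 := h1 _ _ _
  apply mul_right_cancel₀ hdA'
  have key : mu A x a 1 * etaBar A' (a+1) 1 0 = etaBar A' (x * (a+1) + a) x 1 := by
    rw [← hden, e1]
    exact h1 _ _ _
  rw [key, e2]

end S14
namespace S14
open Polynomial
variable {n : ℕ}

lemma dirII (A A' : Matrix (Fin n) (Fin n) ℂ)
    (h01 : ∀ i j, A i j = 0 ∨ A i j = 1) (h01' : ∀ i j, A' i j = 0 ∨ A' i j = 1)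
    (h2 : ∀ a b : ℝ, 0 < a → 0 < b → ∀ x : ℂ, mu A x (a : ℂ) (b : ℂ) = mu A' x (a : ℂ) (b : ℂ)) :
    ∀ x t u : ℂ, etaBar A x t u = etaBar A' x t u := by
  -- Step A: cross-multiplied identity on the real region
  have stepA : ∀ (x : ℂ) (a b : ℝ), 0 < a → 0 < b →
      etaBar A (x*((a:ℂ)+(b:ℂ))+(a:ℂ)) x 1 * etaBar A' ((a:ℂ)+(b:ℂ)) 1 0
        = etaBar A' (x*((a:ℂ)+(b:ℂ))+(a:ℂ)) x 1 * etaBar A ((a:ℂ)+(b:ℂ)) 1 0 := by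
    intro x a b ha hb
    have hre : (0:ℝ) < ((a:ℂ) + (b:ℂ)).re := by
      simp only [Complex.add_re, Complex.ofReal_re]; linarith
    have hU : IsUnit (((a:ℂ)+(b:ℂ)) • (1 : Matrix (Fin n) (Fin n) ℂ) + degC A) :=
      (isUnit_iff A _).mpr (eta_pos_ne A h01 _ hre)
    have hU' : IsUnit (((a:ℂ)+(b:ℂ)) • (1 : Matrix (Fin n) (Fin n) ℂ) + degC A') :=
      (isUnit_iff A' _).mpr (eta_pos_ne A' h01' _ hre)
    rw [← mu_mul A x _ _ hU, ← mu_mul A' x _ _ hU', h2 a b ha hb x]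
    ring
  -- Step B: extend the second real variable to all of ℂ
  have stepB : ∀ (x : ℂ) (a : ℝ), 0 < a → ∀ s : ℂ,
      etaBar A (x*s+(a:ℂ)) x 1 * etaBar A' s 1 0
        = etaBar A' (x*s+(a:ℂ)) x 1 * etaBar A s 1 0 := by
    intro x a ha s
    have hpq : etaP A x (a:ℂ) 0 x 0 1 * etaP A' 1 0 0 1 0 0
        = etaP A' x (a:ℂ) 0 x 0 1 * etaP A 1 0 0 1 0 0 := by
      apply eval_ext (inf_image a)
      rintro z ⟨r, hr, rfl⟩
      rw [Polynomial.eval_mul, Polynomial.eval_mul, etaP_eval, etaP_eval, etaP_eval, etaP_eval]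
      simp only [zero_mul, zero_add, one_mul, add_zero, mul_zero]
      have key := stepA x a (r - a) ha (by simp at hr; linarith)
      have harg : ((a:ℂ) + ((r:ℝ) - a : ℝ)) = ((r:ℝ):ℂ) := by push_cast; ring
      rw [harg] at key
      exact key
    have := congrArg (Polynomial.eval s) hpq
    rw [Polynomial.eval_mul, Polynomial.eval_mul, etaP_eval, etaP_eval, etaP_eval, etaP_eval] at this
    simpa using this
  -- Step C: extend the first real variable to all of ℂ
  have stepC : ∀ (x s a : ℂ),
      etaBar A (x*s+a) x 1 * etaBar A' s 1 0 = etaBar A' (x*s+a) x 1 * etaBar A s 1 0 := by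
    intro x s a
    have hpq : etaP A 1 (x*s) 0 x 0 1 * etaP A' 0 s 0 1 0 0
        = etaP A' 1 (x*s) 0 x 0 1 * etaP A 0 s 0 1 0 0 := by
      apply eval_ext (inf_image 0)
      rintro z ⟨r, hr, rfl⟩
      rw [Polynomial.eval_mul, Polynomial.eval_mul, etaP_eval, etaP_eval, etaP_eval, etaP_eval]
      simp only [zero_mul, zero_add, one_mul, add_zero, mul_zero]
      have key := stepB x r (by simpa using hr) s
      rw [show x*s+((r:ℝ):ℂ) = (r:ℝ)+x*s from by ring] at key
      exact key
    have := congrArg (Polynomial.eval a) hpq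
    rw [Polynomial.eval_mul, Polynomial.eval_mul, etaP_eval, etaP_eval, etaP_eval, etaP_eval] at this
    simp only [zero_mul, zero_add, one_mul, add_zero, mul_zero] at this
    rw [show (a:ℂ)+x*s = x*s+a from by ring] at this
    exact this
  -- Step D: find a point where both `det(y·I + A)` values are nonzero
  have hmonA : (etaP A 1 0 0 0 0 1).Monic := by
    have : etaP A 1 0 0 0 0 1 = ((X : ℂ[X]) • (1 : Matrix (Fin n) (Fin n) ℂ[X]) + A.map C).det := by
      unfold etaP
      congr 1
      ext i j
      simp [Matrix.one_apply, Matrix.map_apply]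
    rw [this, det_X_one_add]
    exact Matrix.charpoly_monic _
  have hmonA' : (etaP A' 1 0 0 0 0 1).Monic := by
    have : etaP A' 1 0 0 0 0 1 = ((X : ℂ[X]) • (1 : Matrix (Fin n) (Fin n) ℂ[X]) + A'.map C).det := by
      unfold etaP
      congr 1
      ext i j
      simp [Matrix.one_apply, Matrix.map_apply]
    rw [this, det_X_one_add]
    exact Matrix.charpoly_monic _
  obtain ⟨y₀, hy₀⟩ := exists_eval_ne (mul_ne_zero hmonA.ne_zero hmonA'.ne_zero)
  rw [Polynomial.eval_mul, mul_ne_zero_iff] at hy₀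
  obtain ⟨hk, hk'⟩ := hy₀
  rw [etaP_eval] at hk hk'
  simp only [zero_mul, zero_add, one_mul, add_zero, mul_zero] at hk hk'
  -- hk : etaBar A y₀ 0 1 ≠ 0, hk' : etaBar A' y₀ 0 1 ≠ 0
  have hPR : ∀ s : ℂ, etaBar A y₀ 0 1 * etaBar A' s 1 0 = etaBar A' y₀ 0 1 * etaBar A s 1 0 := by
    intro s
    have := stepC 0 s y₀
    rw [show (0:ℂ)*s+y₀ = y₀ from by ring] at this
    exact this
  -- κ-argument on monic polynomials
  have hpoly : C (etaBar A y₀ 0 1) * Pp A' = C (etaBar A' y₀ 0 1) * Pp A := by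
    apply Polynomial.funext
    intro s
    rw [Polynomial.eval_mul, Polynomial.eval_mul, Polynomial.eval_C, Polynomial.eval_C,
      Pp_eval, Pp_eval]
    exact hPR s
  have hkk : etaBar A y₀ 0 1 = etaBar A' y₀ 0 1 := by
    have := congrArg (fun p => Polynomial.coeff p n) hpoly
    simp only [Polynomial.coeff_C_mul] at this
    have c1 : (Pp A').coeff n = 1 := by
      have h := (Pp_monic A').coeff_natDegree
      rwa [Pp_natDegree A'] at h
    have c2 : (Pp A).coeff n = 1 := by
      have h := (Pp_monic A).coeff_natDegree
      rwa [Pp_natDegree A] at h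
    rw [c1, c2] at this
    simpa using this
  have hP : ∀ s : ℂ, etaBar A s 1 0 = etaBar A' s 1 0 := by
    intro s
    have := hPR s
    rw [hkk] at this
    exact (mul_left_cancel₀ hk' this).symm
  -- conclude E equality
  obtain ⟨s₀, hs₀⟩ := exists_eval_ne (Pp_monic A).ne_zero
  rw [Pp_eval] at hs₀
  have hE : ∀ y x : ℂ, etaBar A y x 1 = etaBar A' y x 1 := by
    intro y x
    have := stepC x s₀ (y - x*s₀)
    rw [show x*s₀+(y-x*s₀) = y from by ring, ← hP s₀] at this
    exact mul_right_cancel₀ hs₀ (by rw [this])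
  exact fin_step A A' hE

end S14
namespace S14
open Polynomial
variable {n : ℕ}

lemma fin_root_shift (A : Matrix (Fin n) (Fin n) ℂ) (c : ℂ) :
    {z : ℂ | etaBar A (z+c) 1 0 = 0}.Finite := by
  have h1 : {s : ℂ | (Pp A).IsRoot s}.Finite :=
    Polynomial.finite_setOf_isRoot (Pp_monic A).ne_zero
  have heq : {z : ℂ | etaBar A (z+c) 1 0 = 0} = (fun z => z + c) ⁻¹' {s | (Pp A).IsRoot s} := by
    ext z
    simp [Set.mem_preimage, Polynomial.IsRoot, Pp_eval]
  rw [heq]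
  exact Set.Finite.preimage (fun x _ y _ h => add_right_cancel h) h1

lemma dirIV (hn : 0 < n) (A A' : Matrix (Fin n) (Fin n) ℂ)
    (hdiag : ∀ i, A i i = 0) (hdiag' : ∀ i, A' i i = 0) (c : ℂ)
    (H : ∀ a x : ℂ,
        IsUnit ((a + c) • (1 : Matrix (Fin n) (Fin n) ℂ) + degC A) →
        IsUnit ((a + c) • (1 : Matrix (Fin n) (Fin n) ℂ) + degC A') →
        mu A x a c = mu A' x a c) :
    ∀ x t u : ℂ, etaBar A x t u = etaBar A' x t u := by
  set G : Set ℂ :=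
    ({z : ℂ | etaBar A (z+c) 1 0 = 0} ∪ {z : ℂ | etaBar A' (z+c) 1 0 = 0} ∪ {(0:ℂ)})ᶜ with hGdef
  have hGinf : G.Infinite :=
    (((fin_root_shift A c).union (fin_root_shift A' c)).union (Set.finite_singleton 0)).infinite_compl
  have hGmem : ∀ z ∈ G, etaBar A (z+c) 1 0 ≠ 0 ∧ etaBar A' (z+c) 1 0 ≠ 0 ∧ z ≠ 0 := by
    intro z hz
    rw [hGdef] at hz
    simp only [Set.mem_compl_iff, Set.mem_union, Set.mem_singleton_iff, Set.mem_setOf_eq] at hz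
    push_neg at hz
    exact ⟨hz.1.1, hz.1.2, hz.2⟩
  -- Step A: cross identity on G
  have crossG : ∀ z ∈ G, ∀ x : ℂ,
      etaBar A (x*(z+c)+z) x 1 * etaBar A' (z+c) 1 0
        = etaBar A' (x*(z+c)+z) x 1 * etaBar A (z+c) 1 0 := by
    intro z hz x
    obtain ⟨h1, h2, _⟩ := hGmem z hz
    have hU : IsUnit ((z + c) • (1 : Matrix (Fin n) (Fin n) ℂ) + degC A) :=
      (isUnit_iff A _).mpr h1
    have hU' : IsUnit ((z + c) • (1 : Matrix (Fin n) (Fin n) ℂ) + degC A') :=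
      (isUnit_iff A' _).mpr h2
    rw [← mu_mul A x z c hU, ← mu_mul A' x z c hU', H z x hU hU']
    ring
  -- Step B: extend z to all of ℂ
  have C2 : ∀ x z : ℂ,
      etaBar A ((x+1)*z+x*c) x 1 * etaBar A' (z+c) 1 0
        = etaBar A' ((x+1)*z+x*c) x 1 * etaBar A (z+c) 1 0 := by
    intro x z
    have hpq : etaP A (x+1) (x*c) 0 x 0 1 * etaP A' 1 c 0 1 0 0
        = etaP A' (x+1) (x*c) 0 x 0 1 * etaP A 1 c 0 1 0 0 := by
      apply eval_ext hGinf
      intro w hw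
      rw [Polynomial.eval_mul, Polynomial.eval_mul, etaP_eval, etaP_eval, etaP_eval, etaP_eval]
      simp only [zero_mul, zero_add, one_mul, add_zero, mul_zero]
      have key := crossG w hw x
      rw [show x*(w+c)+w = (x+1)*w+x*c from by ring] at key
      exact key
    have := congrArg (Polynomial.eval z) hpq
    rw [Polynomial.eval_mul, Polynomial.eval_mul, etaP_eval, etaP_eval, etaP_eval, etaP_eval] at this
    simpa using this
  -- Step C: equality of the degree polynomials via the derivative trick
  have hderiv : derivative (Pp A) * Pp A' = derivative (Pp A') * Pp A := by
    apply eval_ext (S := (fun z => z + c) '' G) (hGinf.image (fun x _ y _ h => add_right_cancel h))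
    rintro s ⟨z, hz, rfl⟩
    obtain ⟨hzA, hzA', hz0⟩ := hGmem z hz
    have hmA : ∀ i, (z+c) + dd A i ≠ 0 := by
      rw [eta_s10] at hzA
      exact fun i => Finset.prod_ne_zero_iff.mp hzA i (Finset.mem_univ i)
    have hmA' : ∀ i, (z+c) + dd A' i ≠ 0 := by
      rw [eta_s10] at hzA'
      exact fun i => Finset.prod_ne_zero_iff.mp hzA' i (Finset.mem_univ i)
    have hpoly : etaP A (z+c) z 1 0 0 1 * C (etaBar A' (z+c) 1 0)
        = etaP A' (z+c) z 1 0 0 1 * C (etaBar A (z+c) 1 0) := by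
      apply Polynomial.funext
      intro x
      rw [Polynomial.eval_mul, Polynomial.eval_mul, Polynomial.eval_C, Polynomial.eval_C,
        etaP_eval, etaP_eval]
      simp only [zero_mul, zero_add, one_mul, add_zero, mul_zero]
      have key := C2 x z
      rw [show (x+1)*z+x*c = (z+c)*x+z from by ring] at key
      exact key
    have hqA : ∀ (B : Matrix (Fin n) (Fin n) ℂ), etaP B (z+c) z 1 0 0 1
        = ((X : ℂ[X]) • ((Matrix.diagonal (fun i => (z+c) + dd B i)).map C)
            + (B + z • 1).map C).det := by
      intro B
      unfold etaP
      congr 1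
      apply Matrix.ext
      intro i j
      rcases eq_or_ne i j with h | h
      · subst h
        simp [Matrix.one_apply, Matrix.map_apply, degC, dd]
        ring
      · simp [Matrix.one_apply, Matrix.map_apply, degC, h]
    have hPd : ∀ (B : Matrix (Fin n) (Fin n) ℂ), (∀ i, (z+c) + dd B i ≠ 0) →
        (∏ i, ((z+c) + dd B i)) * (∑ i, ((z+c) + dd B i)⁻¹)
          = (derivative (Pp B)).eval (z+c) := by
      intro B hmB
      rw [Pp_deriv_eval, Finset.mul_sum]
      apply Finset.sum_congr rfl
      intro i _
      rw [← Finset.mul_prod_erase Finset.univ (fun j => (z+c) + dd B j) (Finset.mem_univ i),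
        mul_comm ((z+c) + dd B i), mul_assoc, mul_inv_cancel₀ (hmB i), mul_one]
    have hc := congrArg (fun p => p.coeff (n-1)) hpoly
    simp only [Polynomial.coeff_mul_C] at hc
    rw [hqA A, hqA A', coeff_det_diag hn _ hmA (A + z • 1),
      coeff_det_diag hn _ hmA' (A' + z • 1)] at hc
    simp only [Matrix.add_apply, Matrix.smul_apply, Matrix.one_apply_eq, smul_eq_mul, mul_one,
      hdiag, hdiag', zero_add] at hc
    rw [← Finset.sum_mul, ← Finset.sum_mul] at hc
    rw [Polynomial.eval_mul, Polynomial.eval_mul, Pp_eval, Pp_eval,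
      ← hPd A hmA, ← hPd A' hmA', eta_s10, eta_s10]
    apply mul_right_cancel₀ hz0
    rw [eta_s10, eta_s10] at hc
    linear_combination hc
  have hPp : Pp A = Pp A' :=
    monic_eq_of_deriv hn (Pp_monic A) (Pp_monic A') (Pp_natDegree A) (Pp_natDegree A') hderiv
  have hP : ∀ s : ℂ, etaBar A s 1 0 = etaBar A' s 1 0 := fun s => by
    rw [← Pp_eval, ← Pp_eval, hPp]
  -- Step D: conclude equality of etaBar(·,·,1)
  have hEz : ∀ x z : ℂ, etaBar A ((x+1)*z+x*c) x 1 = etaBar A' ((x+1)*z+x*c) x 1 := by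
    intro x z
    have hpq : etaP A (x+1) (x*c) 0 x 0 1 = etaP A' (x+1) (x*c) 0 x 0 1 := by
      apply eval_ext (fin_root_shift A c).infinite_compl
      intro w hw
      have hne : etaBar A (w+c) 1 0 ≠ 0 := hw
      rw [etaP_eval, etaP_eval]
      simp only [zero_mul, zero_add, one_mul, add_zero, mul_zero]
      have key := C2 x w
      rw [← hP (w+c)] at key
      exact mul_right_cancel₀ hne key
    have := congrArg (Polynomial.eval z) hpq
    rw [etaP_eval, etaP_eval] at this
    simpa using this
  have hE : ∀ y x : ℂ, etaBar A y x 1 = etaBar A' y x 1 := by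
    intro y x
    have hpq : etaP A 0 y 1 0 0 1 = etaP A' 0 y 1 0 0 1 := by
      apply eval_ext (inf_ne (-1))
      intro x' hx'
      rw [etaP_eval, etaP_eval]
      simp only [zero_mul, zero_add, one_mul, add_zero, mul_zero]
      have hx1 : x' + 1 ≠ 0 := by
        intro h0
        exact hx' (by linear_combination h0)
      have := hEz x' ((y - x'*c)/(x'+1))
      rw [show (x'+1)*((y - x'*c)/(x'+1))+x'*c = y from by field_simp; ring] at this
      exact this
    have := congrArg (Polynomial.eval x) hpq
    rw [etaP_eval, etaP_eval] at this
    simpa using this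
  exact fin_step A A' hE
end S14

/-- For simple graphs `G, G'` on `n` vertices the following are
equivalent: (1) equality of the generalized characteristic polynomials; (2) equality of
`μ` for all real `a, b > 0`; (3) equality of `μ(·,·,c)` for some `c ∈ ℂ` wherever both
resolvents exist. -/
theorem stmt_14 {n : ℕ} (A A' : Matrix (Fin n) (Fin n) ℂ)
    (h01 : ∀ i j, A i j = 0 ∨ A i j = 1) (h01' : ∀ i j, A' i j = 0 ∨ A' i j = 1)
    (hsymm : Aᵀ = A) (hsymm' : A'ᵀ = A')
    (hdiag : ∀ i, A i i = 0) (hdiag' : ∀ i, A' i i = 0) :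
    ((∀ x t u : ℂ, etaBar A x t u = etaBar A' x t u) ↔
      (∀ a b : ℝ, 0 < a → 0 < b → ∀ x : ℂ, mu A x (a : ℂ) (b : ℂ) = mu A' x (a : ℂ) (b : ℂ))) ∧
    ((∀ a b : ℝ, 0 < a → 0 < b → ∀ x : ℂ, mu A x (a : ℂ) (b : ℂ) = mu A' x (a : ℂ) (b : ℂ)) ↔
      (∃ c : ℂ, ∀ a x : ℂ,
        IsUnit ((a + c) • (1 : Matrix (Fin n) (Fin n) ℂ) + degC A) →
        IsUnit ((a + c) • (1 : Matrix (Fin n) (Fin n) ℂ) + degC A') →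
        mu A x a c = mu A' x a c)) := by
  rcases Nat.eq_zero_or_pos n with hn | hn
  · subst hn
    refine ⟨⟨fun _ => ?_, fun _ x t u => ?_⟩, ⟨fun _ => ⟨0, fun a x _ _ => ?_⟩, fun _ a b _ _ x => ?_⟩⟩
    · intro a b _ _ x; simp [mu, Matrix.det_isEmpty]
    · simp [etaBar, Matrix.det_isEmpty]
    · simp [mu, Matrix.det_isEmpty]
    · simp [mu, Matrix.det_isEmpty]
  · refine ⟨⟨fun h1 => S14.dirI A A' h01 h01' h1, fun h2 => S14.dirII A A' h01 h01' h2⟩,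
      ⟨fun h2 => S14.dirIII A A' (S14.dirII A A' h01 h01' h2), ?_⟩⟩
    rintro ⟨c, H⟩
    exact S14.dirI A A' h01 h01' (S14.dirIV hn A A' hdiag hdiag' c H)
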